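/- arXiv:0804.1589 — 4 statements merged into one kernel-verified Lean document; each statement's English description precedes it below -/
import Mathlib

section
/- Duhamel-type identity: for bounded operators x, y on a Hilbert space, e^x e^{-y} = 1 + ∫₀¹ e^{t x} (x − y) e^{-t y} dt. In particular, if x − y is trace class then e^x e^{-y} − 1 is trace class. -/
open NormedSpace

set_option maxHeartbeats 1000000
set_option synthInstance.maxHeartbeats 400000

/-- Duhamel-type identity: for bounded operators `x, y` on a
complex Hilbert space, `e^x e^{-y} = 1 + ∫₀¹ e^{t x} (x - y) e^{-t y} dt`.
In particular, if `x - y` belongs to a closed two-sided ideal `L1`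
(e.g. the trace-class operators), then `e^x e^{-y} - 1 ∈ L1`. -/
theorem stmt_4 {H : Type*} [NormedAddCommGroup H] [InnerProductSpace ℂ H]
    [CompleteSpace H]
    (L1 : Submodule ℂ (H →L[ℂ] H))
    (hL1closed : IsClosed (L1 : Set (H →L[ℂ] H)))
    (hL1l : ∀ (a T : H →L[ℂ] H), T ∈ L1 → a * T ∈ L1)
    (hL1r : ∀ (a T : H →L[ℂ] H), T ∈ L1 → T * a ∈ L1)
    (x y : H →L[ℂ] H) :
    (exp x * exp (-y) =
      1 + ∫ t in (0:ℝ)..1, exp (t • x) * (x - y) * exp (-(t • y))) ∧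
    (x - y ∈ L1 → exp x * exp (-y) - 1 ∈ L1) := by
  have hexp : True := trivial
  -- derivative of the product
  have key : ∀ t : ℝ, HasDerivAt (fun t : ℝ => exp (t • x) * exp (-(t • y)))
      (exp (t • x) * (x - y) * exp (-(t • y))) t := by
    intro t
    have h1 : HasDerivAt (fun t : ℝ => exp (t • x)) (exp (t • x) * x) t := by
      simpa [hexp] using hasDerivAt_exp_smul_const (𝕂 := ℝ) x t
    have h2 : HasDerivAt (fun t : ℝ => exp (-(t • y))) (exp (-(t • y)) * (-y)) t := by
      simpa [hexp, smul_neg] using hasDerivAt_exp_smul_const (𝕂 := ℝ) (-y) t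
    have h : HasDerivAt (fun t : ℝ => exp (t • x) * exp (-(t • y)))
        (exp (t • x) * x * exp (-(t • y)) + exp (t • x) * (exp (-(t • y)) * -y)) t := h1.mul h2
    convert h using 1
    have hc : exp (-(t • y)) * y = y * exp (-(t • y)) :=
      ((((Commute.refl y).smul_left t).neg_left).exp_left).eq
    simp only [mul_sub, sub_mul, mul_neg, mul_assoc, hc]
    rw [sub_eq_add_neg]
  have hcont : Continuous (fun t : ℝ => exp (t • x) * (x - y) * exp (-(t • y))) := by
    have h1 : Continuous (fun t : ℝ => exp (t • x)) :=
      (continuous_iff_continuousAt.2 fun z => (exp_analytic (𝕂 := ℂ) (z : H →L[ℂ] H)).continuousAt).comp (continuous_id.smul continuous_const)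
    have h2 : Continuous (fun t : ℝ => exp (-(t • y))) :=
      (continuous_iff_continuousAt.2 fun z => (exp_analytic (𝕂 := ℂ) (z : H →L[ℂ] H)).continuousAt).comp ((continuous_id.smul continuous_const).neg)
    exact (h1.mul continuous_const).mul h2
  have hint : IntervalIntegrable (fun t : ℝ => exp (t • x) * (x - y) * exp (-(t • y)))
      MeasureTheory.volume 0 1 := hcont.intervalIntegrable 0 1
  have hFTC : (∫ t in (0:ℝ)..1, exp (t • x) * (x - y) * exp (-(t • y)))
      = exp ((1:ℝ) • x) * exp (-((1:ℝ) • y)) - exp ((0:ℝ) • x) * exp (-((0:ℝ) • y)) :=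
    intervalIntegral.integral_eq_sub_of_hasDerivAt (fun t _ => key t) hint
  have hid : exp x * exp (-y) =
      1 + ∫ t in (0:ℝ)..1, exp (t • x) * (x - y) * exp (-(t • y)) := by
    rw [hFTC]
    simp [exp_zero]
  refine ⟨hid, fun hxy => ?_⟩
  have hmem : ∀ t : ℝ, exp (t • x) * (x - y) * exp (-(t • y)) ∈ L1 := fun t =>
    hL1r _ _ (hL1l _ _ hxy)
  have : (∫ t in (0:ℝ)..1, exp (t • x) * (x - y) * exp (-(t • y))) ∈ L1 := by
    rw [intervalIntegral.integral_of_le (by norm_num : (0:ℝ) ≤ 1)]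
    have : MeasureTheory.IsProbabilityMeasure
        (MeasureTheory.volume.restrict (Set.Ioc (0:ℝ) 1)) := by
      constructor
      simp [Real.volume_Ioc]
    refine (L1.restrictScalars ℝ).convex.integral_mem hL1closed
      (Filter.Eventually.of_forall fun t => hmem t) ?_
    exact hcont.integrableOn_Ioc (μ := MeasureTheory.volume)
  simpa [hid, add_sub_cancel_left] using this
end

section
/- Let S be the unilateral shift on ℓ²(ℕ) and let b : S¹ → ℂ be a smooth function with Fourier expansion b(z) = Σ_{l∈ℤ} b_l z^l, and set b(S) = Σ_{l≥0} b_l S^l + Σ_{l>0} b_{-l} (S^l)*. Then S b(S) S* − b(S) is trace class and Tr(S b(S) S* − b(S)) = −b₀. -/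
open ContinuousLinearMap

lemma adjoint_shift {H : Type*} [NormedAddCommGroup H] [InnerProductSpace ℂ H]
    [CompleteSpace H] (e : HilbertBasis ℕ ℂ H)
    (S : H →L[ℂ] H) (hS : ∀ n : ℕ, S (e n) = e (n + 1)) :
    (adjoint S (e 0) = 0) ∧ ∀ m : ℕ, adjoint S (e (m + 1)) = e m := by
  have hinner : ∀ i j : ℕ, (inner ℂ (e i) (e j) : ℂ) = if i = j then 1 else 0 :=
    orthonormal_iff_ite.mp e.orthonormal
  constructor
  · apply e.repr.injective
    ext i
    rw [e.repr_apply_apply, adjoint_inner_right, hS, map_zero e.repr]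
    simp [hinner]
  · intro m
    apply e.repr.injective
    ext i
    rw [e.repr_apply_apply, e.repr_apply_apply, adjoint_inner_right, hS, hinner, hinner]
    simp

/-- Let `S` be the unilateral shift on `ℓ²(ℕ)` (via a Hilbert
basis `e` with `S (e n) = e (n + 1)`) and `b : S¹ → ℂ` smooth with rapidly
decaying Fourier coefficients `(b l)_{l ∈ ℤ}`; let `B = b(S)` be the
associated Toeplitz-type operator, with matrix entries `⟨e i, B (e j)⟩ = b (i - j)`.
Then `S b(S) S* - b(S)` is trace class and `Tr (S b(S) S* - b(S)) = -b₀`: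
its diagonal with respect to the basis is absolutely summable with sum `-b 0`. -/
theorem stmt_6 {H : Type*} [NormedAddCommGroup H] [InnerProductSpace ℂ H]
    [CompleteSpace H] (e : HilbertBasis ℕ ℂ H)
    (S : H →L[ℂ] H) (hS : ∀ n : ℕ, S (e n) = e (n + 1))
    (b : ℤ → ℂ)
    (hdecay : ∀ k : ℕ, Summable fun l : ℤ => |(l : ℝ)| ^ k * ‖b l‖)
    (B : H →L[ℂ] H)
    (hB : ∀ i j : ℕ, (inner ℂ (e i) (B (e j)) : ℂ) = b ((i : ℤ) - (j : ℤ))) :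
    Summable (fun m : ℕ =>
        ‖(inner ℂ (e m) ((S * B * adjoint S - B) (e m)) : ℂ)‖) ∧
    HasSum (fun m : ℕ =>
        (inner ℂ (e m) ((S * B * adjoint S - B) (e m)) : ℂ)) (-(b 0)) := by
  obtain ⟨h0, hsucc⟩ := adjoint_shift e S hS
  have key : ∀ m : ℕ, (inner ℂ (e m) ((S * B * adjoint S - B) (e m)) : ℂ)
      = if m = 0 then -(b 0) else 0 := by
    intro m
    have hd : ∀ n : ℕ, (inner ℂ (e n) (B (e n)) : ℂ) = b 0 := by
      intro n; simpa using hB n n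
    cases m with
    | zero =>
      simp only [sub_apply, mul_apply, h0, map_zero, inner_sub_right, hd, if_pos rfl,
        inner_zero_right]
      change inner ℂ (e 0) (S (B (adjoint S (e 0)))) - b 0 = _
      rw [h0]
      simp
    | succ m =>
      have : (inner ℂ (e (m + 1)) (S (B (e m))) : ℂ) = inner ℂ (adjoint S (e (m + 1))) (B (e m)) := by
        rw [← adjoint_inner_left]
      simp only [sub_apply, mul_apply, hsucc, inner_sub_right, this, hd, Nat.succ_ne_zero,
        if_false]
      change inner ℂ (e (m + 1)) (S (B (adjoint S (e (m + 1))))) - b 0 = _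
      rw [hsucc, this, hsucc, hd]
      simp
  constructor
  · apply Summable.congr (f := fun m : ℕ => if m = 0 then ‖-(b 0)‖ else 0)
    · exact summable_of_ne_finset_zero (s := {0}) (by intro m hm; simp at hm; simp [hm])
    · intro m; rw [key m]; split <;> simp
  · have : (fun m : ℕ => (inner ℂ (e m) ((S * B * adjoint S - B) (e m)) : ℂ))
        = fun m => if m = 0 then -(b 0) else 0 := funext key
    rw [this]
    simpa using hasSum_ite_eq (0 : ℕ) (-(b 0))
end

section
/- Let S be the unilateral shift on ℓ²(ℕ) and a, b : S¹ → ℂ smooth functions with Fourier coefficients (a_k), (b_l), and a(S), b(S) the associated operators as above. Then the commutator [a(S), b(S)] is trace class and Tr[a(S), b(S)] = Σ_{k∈ℤ} k a_{-k} b_k. -/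
open ContinuousLinearMap

-- aux: diagonal entry of a product, as a HasSum over the intermediate index
lemma key_lemma {H : Type*} [NormedAddCommGroup H] [InnerProductSpace ℂ H]
    [CompleteSpace H] (e : HilbertBasis ℕ ℂ H)
    (T U : H →L[ℂ] H) (t u : ℤ → ℂ)
    (hT : ∀ i j : ℕ, (inner ℂ (e i) (T (e j)) : ℂ) = t ((i : ℤ) - (j : ℤ)))
    (hU : ∀ i j : ℕ, (inner ℂ (e i) (U (e j)) : ℂ) = u ((i : ℤ) - (j : ℤ)))
    (m : ℕ) :
    HasSum (fun n : ℕ => u ((n : ℤ) - m) * t ((m : ℤ) - n))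
      (inner ℂ (e m) ((T * U) (e m)) : ℂ) := by
  have h1 := ((e.hasSum_repr (U (e m))).mapL T).mapL (innerSL ℂ (e m))
  have h2 : ∀ n : ℕ,
      (innerSL ℂ (e m)) (T (e.repr (U (e m)) n • e n)) = u ((n : ℤ) - m) * t ((m : ℤ) - n) := by
    intro n
    rw [map_smul, innerSL_apply_apply, inner_smul_right, e.repr_apply_apply, hU n m, hT m n]

  simp only [h2] at h1
  simpa only [ContinuousLinearMap.mul_apply, innerSL_apply_apply] using h1

-- reindex: sum over ℕ of c (n - m) equals sum of indicator of Ici (-m)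
lemma reindex1 (c : ℤ → ℂ) (hc : Summable c) (m : ℕ) :
    HasSum (fun n : ℕ => c ((n : ℤ) - m))
      (∑' k : ℤ, Set.indicator (Set.Ici (-(m:ℤ))) c k) := by
  have hinj : Function.Injective (fun n : ℕ => (n : ℤ) - m) := by
    intro x y h; simpa using h
  have hr : Set.range (fun n : ℕ => (n : ℤ) - m) = Set.Ici (-(m:ℤ)) := by
    ext k
    simp only [Set.mem_range, Set.mem_Ici]
    constructor
    · rintro ⟨n, rfl⟩; omega
    · intro h; exact ⟨(k + m).toNat, by omega⟩
  have hvan : ∀ x ∉ Set.range (fun n : ℕ => (n : ℤ) - m),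
      Set.indicator (Set.Ici (-(m:ℤ))) c x = 0 := by
    intro x hx
    rw [hr] at hx
    exact Set.indicator_of_notMem hx c
  have h := (hinj.hasSum_iff hvan).2 ((hc.indicator _).hasSum)
  refine h.congr_fun fun n => ?_
  exact Set.indicator_of_mem (show (n:ℤ) - m ∈ Set.Ici (-(m:ℤ)) by simp) c |>.symm

lemma reindex2 (c : ℤ → ℂ) (hc : Summable c) (m : ℕ) :
    HasSum (fun n : ℕ => c ((m : ℤ) - n))
      (∑' k : ℤ, Set.indicator (Set.Iic (m:ℤ)) c k) := by
  have hinj : Function.Injective (fun n : ℕ => (m : ℤ) - n) := by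
    intro x y h; simpa [sub_right_injective.eq_iff] using h
  have hr : Set.range (fun n : ℕ => (m : ℤ) - n) = Set.Iic (m:ℤ) := by
    ext k
    simp only [Set.mem_range, Set.mem_Iic]
    constructor
    · rintro ⟨n, rfl⟩; omega
    · intro h; exact ⟨(m - k).toNat, by omega⟩
  have hvan : ∀ x ∉ Set.range (fun n : ℕ => (m : ℤ) - n),
      Set.indicator (Set.Iic (m:ℤ)) c x = 0 := by
    intro x hx
    rw [hr] at hx
    exact Set.indicator_of_notMem hx c
  have h := (hinj.hasSum_iff hvan).2 ((hc.indicator _).hasSum)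
  refine h.congr_fun fun n => ?_
  exact Set.indicator_of_mem (show (m:ℤ) - n ∈ Set.Iic (m:ℤ) by simp) c |>.symm

lemma gm_hasSum (c : ℤ → ℂ) (hc : Summable c) (m : ℕ) :
    HasSum (fun k : ℤ => if (m:ℤ) < k then c k else if k < -(m:ℤ) then -c k else 0)
      ((∑' k : ℤ, Set.indicator (Set.Ici (-(m:ℤ))) c k)
        - ∑' k : ℤ, Set.indicator (Set.Iic (m:ℤ)) c k) := by
  have hmm : -(m:ℤ) ≤ (m:ℤ) := by omega
  have hd1 : Disjoint (Set.Icc (-(m:ℤ)) m) (Set.Ioi (m:ℤ)) := by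
    rw [Set.disjoint_left]; intro k hk hk'
    simp only [Set.mem_Icc] at hk
    simp only [Set.mem_Ioi] at hk'
    omega
  have hd2 : Disjoint (Set.Iio (-(m:ℤ))) (Set.Icc (-(m:ℤ)) m) := by
    rw [Set.disjoint_left]; intro k hk hk'
    simp only [Set.mem_Icc] at hk'
    simp only [Set.mem_Iio] at hk
    omega
  have e1 : (∑' k : ℤ, Set.indicator (Set.Ici (-(m:ℤ))) c k)
      = (∑' k : ℤ, Set.indicator (Set.Icc (-(m:ℤ)) m) c k)
        + ∑' k : ℤ, Set.indicator (Set.Ioi (m:ℤ)) c k := by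
    rw [← Summable.tsum_add (hc.indicator _) (hc.indicator _)]
    congr 1
    ext k
    rw [← Set.Icc_union_Ioi_eq_Ici hmm, Set.indicator_union_of_disjoint hd1]
  have e2 : (∑' k : ℤ, Set.indicator (Set.Iic (m:ℤ)) c k)
      = (∑' k : ℤ, Set.indicator (Set.Iio (-(m:ℤ))) c k)
        + ∑' k : ℤ, Set.indicator (Set.Icc (-(m:ℤ)) m) c k := by
    rw [← Summable.tsum_add (hc.indicator _) (hc.indicator _)]
    congr 1
    ext k
    rw [← Set.Iio_union_Icc_eq_Iic hmm, Set.indicator_union_of_disjoint hd2]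
  rw [e1, e2]
  have h := ((hc.indicator (Set.Ioi (m:ℤ))).hasSum).sub ((hc.indicator (Set.Iio (-(m:ℤ)))).hasSum)
  have heq : (fun k : ℤ => Set.indicator (Set.Ioi (m:ℤ)) c k - Set.indicator (Set.Iio (-(m:ℤ))) c k)
      = fun k : ℤ => if (m:ℤ) < k then c k else if k < -(m:ℤ) then -c k else 0 := by
    ext k
    by_cases h1 : (m:ℤ) < k
    · rw [Set.indicator_of_mem (by simpa using h1),
        Set.indicator_of_notMem (by simp only [Set.mem_Iio]; omega), if_pos h1, sub_zero]
    · by_cases h2 : k < -(m:ℤ)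
      · rw [Set.indicator_of_notMem (by simpa using h1),
          Set.indicator_of_mem (by simpa using h2), if_neg h1, if_pos h2, zero_sub]
      · rw [Set.indicator_of_notMem (by simpa using h1),
          Set.indicator_of_notMem (by simpa using h2), if_neg h1, if_neg h2, sub_zero]
  rw [heq] at h
  convert h using 1
  · rfl
  ring

lemma col_hasSum (c : ℤ → ℂ) (k : ℤ) :
    HasSum (fun m : ℕ => if (m:ℤ) < k then c k else if k < -(m:ℤ) then -c k else 0)
      ((k:ℂ) * c k) := by
  have hzero : ∀ m : ℕ, m ∉ Finset.range k.natAbs →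
      (if (m:ℤ) < k then c k else if k < -(m:ℤ) then -c k else 0) = 0 := by
    intro m hm
    simp only [Finset.mem_range] at hm
    rw [if_neg (by omega), if_neg (by omega)]
  have h : HasSum _ _ := hasSum_sum_of_ne_finset_zero hzero
  convert h using 1
  rcases lt_trichotomy k 0 with hk | hk | hk
  · have : ∀ m ∈ Finset.range k.natAbs,
        (if (m:ℤ) < k then c k else if k < -(m:ℤ) then -c k else 0) = -c k := by
      intro m hm
      simp only [Finset.mem_range] at hm
      rw [if_neg (by omega), if_pos (by omega)]
    rw [Finset.sum_congr rfl this, Finset.sum_const, Finset.card_range, nsmul_eq_mul]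
    have : ((k.natAbs : ℂ)) = -(k:ℂ) := by
      have hk' : (k.natAbs : ℤ) = -k := by omega
      rw [← Int.cast_natCast (R := ℂ), hk', Int.cast_neg]
    rw [this]; ring
  · subst hk; simp
  · have : ∀ m ∈ Finset.range k.natAbs,
        (if (m:ℤ) < k then c k else if k < -(m:ℤ) then -c k else 0) = c k := by
      intro m hm
      simp only [Finset.mem_range] at hm
      rw [if_pos (by omega)]
    rw [Finset.sum_congr rfl this, Finset.sum_const, Finset.card_range, nsmul_eq_mul]
    have : ((k.natAbs : ℂ)) = (k:ℂ) := by
      have hk' : (k.natAbs : ℤ) = k := by omega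
      rw [← Int.cast_natCast (R := ℂ), hk']
    rw [this]

lemma col_norm_hasSum (c : ℤ → ℂ) (k : ℤ) :
    HasSum (fun m : ℕ => ‖if (m:ℤ) < k then c k else if k < -(m:ℤ) then -c k else 0‖)
      (|(k:ℝ)| * ‖c k‖) := by
  have hzero : ∀ m : ℕ, m ∉ Finset.range k.natAbs →
      ‖if (m:ℤ) < k then c k else if k < -(m:ℤ) then -c k else 0‖ = 0 := by
    intro m hm
    simp only [Finset.mem_range] at hm
    rw [if_neg (by omega), if_neg (by omega), norm_zero]
  have h : HasSum _ _ := hasSum_sum_of_ne_finset_zero hzero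
  convert h using 1
  have : ∀ m ∈ Finset.range k.natAbs,
      ‖if (m:ℤ) < k then c k else if k < -(m:ℤ) then -c k else 0‖ = ‖c k‖ := by
    intro m hm
    simp only [Finset.mem_range] at hm
    rcases lt_or_ge (m:ℤ) k with h1 | h1
    · rw [if_pos h1]
    · rw [if_neg (by omega), if_pos (by omega), norm_neg]
  rw [Finset.sum_congr rfl this, Finset.sum_const, Finset.card_range, nsmul_eq_mul]
  congr 1
  rw [← Int.cast_natCast (R := ℝ), ← Int.abs_eq_natAbs, Int.cast_abs]

set_option maxHeartbeats 2000000 in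
/-- Let `S` be the unilateral shift on `ℓ²(ℕ)` (via a Hilbert
basis `e` with `S (e n) = e (n+1)`) and `a, b : S¹ → ℂ` smooth with rapidly
decaying Fourier coefficients `(a k)`, `(b l)`; let `A = a(S)`, `B = b(S)` be
the associated operators, with matrix entries `⟨e i, A (e j)⟩ = a (i - j)`
and `⟨e i, B (e j)⟩ = b (i - j)`. Then the commutator `[a(S), b(S)]` is trace
class and `Tr [a(S), b(S)] = Σ_{k ∈ ℤ} k a_{-k} b_k`: its diagonal with
respect to the basis is absolutely summable with sum `Σ_k k a (-k) b k`. -/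
theorem stmt_7 {H : Type*} [NormedAddCommGroup H] [InnerProductSpace ℂ H]
    [CompleteSpace H] (e : HilbertBasis ℕ ℂ H)
    (S : H →L[ℂ] H) (hS : ∀ n : ℕ, S (e n) = e (n + 1))
    (a b : ℤ → ℂ)
    (hadecay : ∀ k : ℕ, Summable fun l : ℤ => |(l : ℝ)| ^ k * ‖a l‖)
    (hbdecay : ∀ k : ℕ, Summable fun l : ℤ => |(l : ℝ)| ^ k * ‖b l‖)
    (A B : H →L[ℂ] H)
    (hA : ∀ i j : ℕ, (inner ℂ (e i) (A (e j)) : ℂ) = a ((i : ℤ) - (j : ℤ)))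
    (hB : ∀ i j : ℕ, (inner ℂ (e i) (B (e j)) : ℂ) = b ((i : ℤ) - (j : ℤ))) :
    Summable (fun m : ℕ =>
        ‖(inner ℂ (e m) ((A * B - B * A) (e m)) : ℂ)‖) ∧
    HasSum (fun m : ℕ => (inner ℂ (e m) ((A * B - B * A) (e m)) : ℂ))
      (∑' k : ℤ, (k : ℂ) * a (-k) * b k) := by
  classical
  set c : ℤ → ℂ := fun k => a (-k) * b k with hcdef
  have ha0 : Summable fun l : ℤ => ‖a l‖ := by simpa using hadecay 0
  have hb0 : Summable fun l : ℤ => ‖b l‖ := by simpa using hbdecay 0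
  have hb1 : Summable fun l : ℤ => |(l : ℝ)| * ‖b l‖ := by simpa using hbdecay 1
  set C : ℝ := ∑' l : ℤ, ‖a l‖ with hCdef
  have haC : ∀ l : ℤ, ‖a l‖ ≤ C := fun l => Summable.le_tsum ha0 l fun _ _ => norm_nonneg _
  have hcle : ∀ k : ℤ, ‖c k‖ ≤ C * ‖b k‖ := by
    intro k
    calc ‖c k‖ ≤ ‖a (-k)‖ * ‖b k‖ := norm_mul_le _ _
      _ ≤ C * ‖b k‖ := mul_le_mul_of_nonneg_right (haC _) (norm_nonneg _)
  have hc0 : Summable fun k : ℤ => ‖c k‖ :=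
    Summable.of_nonneg_of_le (fun _ => norm_nonneg _) hcle (hb0.mul_left C)
  have hc1 : Summable fun k : ℤ => |(k : ℝ)| * ‖c k‖ := by
    refine Summable.of_nonneg_of_le
      (fun k => mul_nonneg (abs_nonneg _) (norm_nonneg _)) (fun k => ?_)
      (hb1.mul_left C)
    calc |(k : ℝ)| * ‖c k‖ ≤ |(k : ℝ)| * (C * ‖b k‖) :=
          mul_le_mul_of_nonneg_left (hcle k) (abs_nonneg _)
      _ = C * (|(k : ℝ)| * ‖b k‖) := by ring
  have hcs : Summable c := hc0.of_norm
  set g : ℕ → ℤ → ℂ :=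
    fun m k => if (m : ℤ) < k then c k else if k < -(m : ℤ) then -c k else 0 with hgdef
  -- diagonal entries
  have hdiag : ∀ m : ℕ, HasSum (g m) (inner ℂ (e m) ((A * B - B * A) (e m)) : ℂ) := by
    intro m
    have hAB := key_lemma e A B a b hA hB m
    have hBA := key_lemma e B A b a hB hA m
    have hAB' : HasSum (fun n : ℕ => c ((n : ℤ) - m))
        (inner ℂ (e m) ((A * B) (e m)) : ℂ) := by
      refine hAB.congr_fun fun n => ?_
      show a (-((n:ℤ) - m)) * b ((n:ℤ) - m) = _
      rw [neg_sub]; ring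
    have hBA' : HasSum (fun n : ℕ => c ((m : ℤ) - n))
        (inner ℂ (e m) ((B * A) (e m)) : ℂ) := by
      refine hBA.congr_fun fun n => ?_
      show a (-((m:ℤ) - n)) * b ((m:ℤ) - n) = _
      rw [neg_sub]
    have hval : (inner ℂ (e m) ((A * B) (e m)) : ℂ) - inner ℂ (e m) ((B * A) (e m))
        = (∑' k : ℤ, Set.indicator (Set.Ici (-(m:ℤ))) c k)
          - ∑' k : ℤ, Set.indicator (Set.Iic (m:ℤ)) c k :=
      (hAB'.sub hBA').unique ((reindex1 c hcs m).sub (reindex2 c hcs m))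
    have hg := gm_hasSum c hcs m
    rw [← hval] at hg
    have : (inner ℂ (e m) ((A * B - B * A) (e m)) : ℂ)
        = (inner ℂ (e m) ((A * B) (e m)) : ℂ) - inner ℂ (e m) ((B * A) (e m)) := by
      rw [ContinuousLinearMap.sub_apply, inner_sub_right]
    rw [this]
    exact hg
  have hcolN : ∀ k : ℤ, HasSum (fun m : ℕ => ‖g m k‖) (|(k : ℝ)| * ‖c k‖) :=
    fun k => col_norm_hasSum c k
  have hprodN : Summable (fun p : ℤ × ℕ => ‖g p.2 p.1‖) := by
    rw [summable_prod_of_nonneg (fun p => norm_nonneg _)]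
    exact ⟨fun k => (hcolN k).summable, hc1.congr fun k => ((hcolN k).tsum_eq).symm⟩
  have hprodN' : Summable (fun p : ℕ × ℤ => ‖g p.1 p.2‖) :=
    ((Equiv.prodComm ℕ ℤ).summable_iff).mpr hprodN
  have hrowNs : ∀ m : ℕ, Summable fun k : ℤ => ‖g m k‖ :=
    fun m => ((summable_prod_of_nonneg (fun p => norm_nonneg _)).mp hprodN').1 m
  have hrowN : Summable fun m : ℕ => ∑' k : ℤ, ‖g m k‖ :=
    ((summable_prod_of_nonneg (fun p => norm_nonneg _)).mp hprodN').2
  have hfirst : Summable fun m : ℕ => ‖(inner ℂ (e m) ((A * B - B * A) (e m)) : ℂ)‖ := by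
    refine Summable.of_nonneg_of_le (fun _ => norm_nonneg _) (fun m => ?_) hrowN
    rw [← (hdiag m).tsum_eq]
    exact norm_tsum_le_tsum_norm (hrowNs m)
  refine ⟨hfirst, ?_⟩
  have hdsum : Summable fun m : ℕ => (inner ℂ (e m) ((A * B - B * A) (e m)) : ℂ) :=
    hfirst.of_norm
  have hG : Summable (Function.uncurry g) := Summable.of_norm hprodN'
  have hswap : ∑' (k : ℤ) (m : ℕ), g m k = ∑' (m : ℕ) (k : ℤ), g m k :=
    Summable.tsum_comm' hG (fun m => (hrowNs m).of_norm) (fun k => (col_hasSum c k).summable)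
  have hval2 : ∑' m : ℕ, (inner ℂ (e m) ((A * B - B * A) (e m)) : ℂ)
      = ∑' k : ℤ, (k : ℂ) * a (-k) * b k := by
    calc ∑' m : ℕ, (inner ℂ (e m) ((A * B - B * A) (e m)) : ℂ)
        = ∑' (m : ℕ) (k : ℤ), g m k := tsum_congr fun m => ((hdiag m).tsum_eq).symm
      _ = ∑' (k : ℤ) (m : ℕ), g m k := hswap.symm
      _ = ∑' k : ℤ, (k : ℂ) * c k := tsum_congr fun k => (col_hasSum c k).tsum_eq
      _ = ∑' k : ℤ, (k : ℂ) * a (-k) * b k :=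
            tsum_congr fun k => (mul_assoc (k : ℂ) (a (-k)) (b k)).symm
  rw [← hval2]
  exact hdsum.hasSum
end

section
/- Let σ₁, σ₂ : [0,1] → GL(H) be C¹ paths of invertible operators such that σ₂(t) σ₁(t)⁻¹ − 1 is trace class for all t (C¹ in trace norm). Then Tr( (σ₁σ₂⁻¹)'(t) · σ₂(t)σ₁(t)⁻¹ ) = Tr( σ₁'(t)σ₁(t)⁻¹ − (σ₂σ₁⁻¹)(t)⁻¹ σ₂'(t)σ₂(t)⁻¹ (σ₂σ₁⁻¹)(t) ), and if moreover σ₁'(t)σ₁(t)⁻¹ − σ₂'(t)σ₂(t)⁻¹ is trace class, this equals Tr( σ₁'(t)σ₁(t)⁻¹ − σ₂'(t)σ₂(t)⁻¹ ). -/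
/-- Let `σ₁, σ₂ : [0,1] → GL(H)` be `C¹` paths of invertible
operators (with inverse paths `σ₁inv, σ₂inv` and derivatives `σ₁', σ₂'`) such
that `σ₂(s) σ₁(s)⁻¹ - 1` is trace class for all `s`. Let `D` denote the
derivative of `s ↦ σ₁(s) σ₂(s)⁻¹` at `t`. Then
`Tr (D · σ₂(t) σ₁(t)⁻¹) = Tr (σ₁'(t) σ₁(t)⁻¹ - (σ₂ σ₁⁻¹)(t)⁻¹ σ₂'(t) σ₂(t)⁻¹ (σ₂ σ₁⁻¹)(t))`,
and if moreover `σ₁'(t) σ₁(t)⁻¹ - σ₂'(t) σ₂(t)⁻¹` is trace class, this equals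
`Tr (σ₁'(t) σ₁(t)⁻¹ - σ₂'(t) σ₂(t)⁻¹)`. Here `L1` is the two-sided ideal of
trace-class operators and `Tr` the operator trace, satisfying
`Tr (A B) = Tr (B A)` for `A ∈ L1`, `B ∈ L(H)`. -/
theorem stmt_17 {H : Type*} [NormedAddCommGroup H] [InnerProductSpace ℂ H]
    [CompleteSpace H]
    (L1 : Submodule ℂ (H →L[ℂ] H))
    (hL1l : ∀ (a T : H →L[ℂ] H), T ∈ L1 → a * T ∈ L1)
    (hL1r : ∀ (a T : H →L[ℂ] H), T ∈ L1 → T * a ∈ L1)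
    (Tr : (H →L[ℂ] H) →ₗ[ℂ] ℂ)
    (hTr : ∀ A B : H →L[ℂ] H, A ∈ L1 → Tr (A * B) = Tr (B * A))
    (σ₁ σ₁' σ₁inv σ₂ σ₂' σ₂inv : ℝ → (H →L[ℂ] H))
    (hinv₁ : ∀ s : ℝ, σ₁ s * σ₁inv s = 1 ∧ σ₁inv s * σ₁ s = 1)
    (hinv₂ : ∀ s : ℝ, σ₂ s * σ₂inv s = 1 ∧ σ₂inv s * σ₂ s = 1)
    (hσ₁' : ∀ s : ℝ, HasDerivAt σ₁ (σ₁' s) s)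
    (hσ₂' : ∀ s : ℝ, HasDerivAt σ₂ (σ₂' s) s)
    (hα : ∀ s : ℝ, σ₂ s * σ₁inv s - 1 ∈ L1)
    (t : ℝ) (D : H →L[ℂ] H)
    (hD : HasDerivAt (fun s => σ₁ s * σ₂inv s) D t) :
    Tr (D * (σ₂ t * σ₁inv t)) =
      Tr (σ₁' t * σ₁inv t -
        (σ₁ t * σ₂inv t) * (σ₂' t * σ₂inv t) * (σ₂ t * σ₁inv t)) ∧
    (σ₁' t * σ₁inv t - σ₂' t * σ₂inv t ∈ L1 →
      Tr (D * (σ₂ t * σ₁inv t)) = Tr (σ₁' t * σ₁inv t - σ₂' t * σ₂inv t)) := by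
  obtain ⟨h11, h12⟩ := hinv₁ t
  obtain ⟨h21, h22⟩ := hinv₂ t
  -- σ₂inv is given by Ring.inverse, hence differentiable with the usual formula
  have hσ₂inv_eq : σ₂inv = fun s => Ring.inverse (σ₂ s) := by
    funext s
    obtain ⟨hs1, hs2⟩ := hinv₂ s
    exact (Ring.inverse_unit ⟨σ₂ s, σ₂inv s, hs1, hs2⟩).symm
  have hD2 : HasDerivAt σ₂inv (-(σ₂inv t * σ₂' t * σ₂inv t)) t := by
    have hr : (Ring.inverse (σ₂ t) : H →L[ℂ] H) = σ₂inv t :=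
      Ring.inverse_unit ⟨σ₂ t, σ₂inv t, h21, h22⟩
    have h := (hasFDerivAt_ringInverse
        (⟨σ₂ t, σ₂inv t, h21, h22⟩ : (H →L[ℂ] H)ˣ)).comp_hasDerivAt t (hσ₂' t)
    rw [hσ₂inv_eq]
    simpa [Function.comp_def, hr] using h
  have hD3 : HasDerivAt (fun s => σ₁ s * σ₂inv s)
      (σ₁' t * σ₂inv t + σ₁ t * -(σ₂inv t * σ₂' t * σ₂inv t)) t := (hσ₁' t).mul hD2
  have hDval : D = σ₁' t * σ₂inv t - σ₁ t * (σ₂inv t * σ₂' t * σ₂inv t) := by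
    rw [hD.unique hD3]; noncomm_ring
  -- Part 1 : an operator identity
  have key : D * (σ₂ t * σ₁inv t) =
      σ₁' t * σ₁inv t -
        (σ₁ t * σ₂inv t) * (σ₂' t * σ₂inv t) * (σ₂ t * σ₁inv t) := by
    rw [hDval, sub_mul]
    have e1 : σ₁' t * σ₂inv t * (σ₂ t * σ₁inv t) = σ₁' t * σ₁inv t := by
      calc σ₁' t * σ₂inv t * (σ₂ t * σ₁inv t)
          = σ₁' t * (σ₂inv t * σ₂ t) * σ₁inv t := by noncomm_ring
        _ = σ₁' t * σ₁inv t := by rw [h22, mul_one]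
    rw [e1]
    congr 1
  refine ⟨congrArg Tr key, fun _ => ?_⟩
  rw [key]
  -- Part 2 : trace computation
  set v := σ₁ t * σ₂inv t with hv
  set u := σ₂ t * σ₁inv t with hu
  set c := σ₂' t * σ₂inv t with hc
  have huv : u * v = 1 := by
    calc u * v = σ₂ t * (σ₁inv t * σ₁ t) * σ₂inv t := by rw [hu, hv]; noncomm_ring
      _ = 1 := by rw [h12, mul_one, h21]
  have hαmem : u - 1 ∈ L1 := hα t
  -- v * c * u = v * c + v * c * (u - 1)
  have e2 : v * c * u = v * c + v * c * (u - 1) := by noncomm_ring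
  have e3 : Tr (v * c * (u - 1)) = Tr (((u - 1) * v) * c) := by
    rw [mul_assoc]
    exact (hTr (u - 1) (v * c) hαmem).symm
  have e4 : (u - 1) * v = 1 - v := by rw [sub_mul, one_mul, huv]
  have e5 : Tr (v * c * u) = Tr c := by
    rw [e2, map_add, e3, e4, sub_mul, one_mul, map_sub]
    ring
  rw [map_sub, map_sub, e5]
end
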